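/- Let n ≥ 1 and let π be a 321-avoiding permutation of {1,…,n}. For each j ∈ {1,…,n} let d_j = #{m : 1 ≤ m < j and π⁻¹(m) > π⁻¹(j)}. Suppose not all d_j are zero, and let s = max{j : d_j ≠ 0}. Then the length of the last ascending run of π, i.e., the largest m such that π(n−m+1) < π(n−m+2) < … < π(n), equals d_s + (n − s). -/

import Mathlib

/-- For a permutation `π` of `{1,…,n}` (0-indexed as `Fin n`), `d j` is the number of
values `m < j` appearing to the right of `j` in the one-line word of `π`, i.e.
`d j = #{m : m < j and π⁻¹(m) > π⁻¹(j)}`. -/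
def dVector {n : ℕ} (π : Equiv.Perm (Fin n)) (j : Fin n) : ℕ :=
  (Finset.univ.filter fun m => m < j ∧ π⁻¹ j < π⁻¹ m).card

/-- `π` is 321-avoiding: there are no positions `i < j < k` with `π(i) > π(j) > π(k)`. -/
def Avoids321 {n : ℕ} (π : Equiv.Perm (Fin n)) : Prop :=
  ¬ ∃ i j k : Fin n, i < j ∧ j < k ∧ π k < π j ∧ π j < π i

lemma perm_apply_inv_self {α : Type*} (f : Equiv.Perm α) (x : α) : f (f⁻¹ x) = x :=
  Equiv.Perm.eq_inv_iff_eq.1 rfl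

lemma perm_inv_apply_self {α : Type*} (f : Equiv.Perm α) (x : α) : f⁻¹ (f x) = x :=
  Equiv.Perm.inv_eq_iff_eq.2 rfl

/-- If `dVector π j = 0` then all `m < j` appear left of `j`. -/
lemma dVector_eq_zero_iff {n : ℕ} (π : Equiv.Perm (Fin n)) (j : Fin n) :
    dVector π j = 0 ↔ ∀ m : Fin n, m < j → π⁻¹ m < π⁻¹ j := by
  unfold dVector
  rw [Finset.card_eq_zero, Finset.filter_eq_empty_iff]
  constructor
  · intro h m hm
    have := h (Finset.mem_univ m)
    push_neg at this
    rcases lt_or_eq_of_le (this hm) with h' | h'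
    · exact h'
    · exact absurd (π⁻¹.injective h') hm.ne
  · intro h m _
    push_neg
    intro hm
    exact le_of_lt (h m hm)

/-- If `dVector π j = 0` for all `j > s`, then `π` fixes everything above `s`. -/
lemma fix_above {n : ℕ} (π : Equiv.Perm (Fin n)) (s : Fin n)
    (h : ∀ j : Fin n, s < j → dVector π j = 0) :
    ∀ j : Fin n, s < j → π⁻¹ j = j := by
  -- step A : j.val ≤ (π⁻¹ j).val
  have hA : ∀ j : Fin n, s < j → j.val ≤ (π⁻¹ j).val := by
    intro j hj
    have h0 := (dVector_eq_zero_iff π j).1 (h j hj)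
    have : (Finset.Iio j).card ≤ (Finset.Iio (π⁻¹ j)).card := by
      apply Finset.card_le_card_of_injOn (fun m => π⁻¹ m)
      · intro m hm
        simp only [Finset.coe_Iio, Set.mem_Iio, Finset.mem_Iio] at *
        exact h0 m hm
      · intro a _ b _ hab
        exact π⁻¹.injective hab
    simpa [Fin.card_Iio] using this
  -- T := values above s, π⁻¹ maps T to T bijectively
  set T : Finset (Fin n) := Finset.univ.filter (fun j => s < j) with hT
  have hmem : ∀ j : Fin n, j ∈ T ↔ s < j := by
    intro j; simp [hT]
  have hmaps : ∀ j ∈ T, π⁻¹ j ∈ T := by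
    intro j hj
    rw [hmem] at *
    have := hA j hj
    exact lt_of_lt_of_le hj (by exact Fin.le_def.2 this)
  have himg : T.image (fun j => π⁻¹ j) = T := by
    apply Finset.eq_of_subset_of_card_le
    · intro x hx
      rcases Finset.mem_image.1 hx with ⟨j, hj, rfl⟩
      exact hmaps j hj
    · rw [Finset.card_image_of_injective _ π⁻¹.injective]
  have hsum : ∑ j ∈ T, ((π⁻¹ j : Fin n) : ℕ) = ∑ j ∈ T, (j : ℕ) := by
    conv_rhs => rw [← himg]
    rw [Finset.sum_image (fun a _ b _ hab => π⁻¹.injective hab)]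
  have := (Finset.sum_eq_sum_iff_of_le (fun j hj => hA j ((hmem j).1 hj))).1 hsum.symm
  intro j hj
  exact Fin.val_injective ((this j ((hmem j).2 hj)).symm)

/-- For a 321-avoiding permutation `π` of `{1,…,n}` whose vector `d` is not identically
zero, with `s` the largest index with `d s ≠ 0`, the length of the last ascending run of
`π` (the largest `m ∈ {1,…,n}` such that the last `m` entries of the one-line word are
increasing) equals `d s + (n - s)` (0-indexed: `d s + (n - (s+1))`). -/
theorem stmt_3 (n : ℕ) (hn : 1 ≤ n) (π : Equiv.Perm (Fin n))
    (h321 : Avoids321 π)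
    (s : Fin n) (hs : dVector π s ≠ 0) (hmax : ∀ j : Fin n, dVector π j ≠ 0 → j ≤ s) :
    IsGreatest {m : ℕ | 1 ≤ m ∧ m ≤ n ∧
        ∀ i j : Fin n, n - m ≤ i.val → i < j → π i < π j}
      (dVector π s + (n - (s.val + 1))) := by
  -- values above s are fixed
  have hzero : ∀ j : Fin n, s < j → dVector π j = 0 := by
    intro j hj
    by_contra h0
    exact absurd (hmax j h0) (not_le.2 hj)
  have hfix : ∀ j : Fin n, s < j → π⁻¹ j = j := fix_above π s hzero
  have hfix' : ∀ j : Fin n, s < j → π j = j := by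
    intro j hj
    conv_lhs => rw [← hfix j hj]
    exact perm_apply_inv_self π j
  set p : Fin n := π⁻¹ s with hp
  have hps : π p = s := perm_apply_inv_self π s
  -- p < s
  have hpls : p < s := by
    rcases lt_trichotomy p s with h' | h' | h'
    · exact h'
    · exfalso
      apply hs
      rw [dVector_eq_zero_iff]
      intro m hm
      by_contra hc
      push_neg at hc
      rcases lt_or_eq_of_le hc with hc' | hc'
      · have hsm : s < π⁻¹ m := by
          calc s = p := h'.symm
          _ < π⁻¹ m := hc'
        have hem := hfix' (π⁻¹ m) hsm
        rw [perm_apply_inv_self π] at hem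
        rw [← hem] at hsm
        exact absurd (hm.trans hsm) (lt_irrefl m)
      · have : s = m := π⁻¹.injective hc'
        rw [this] at hm
        exact lt_irrefl m hm
    · exfalso
      have h2 := hfix' p h'
      rw [hps] at h2
      rw [h2] at h'
      exact lt_irrefl p h'
  -- values at positions in (p, s] are < s
  have hmid : ∀ t : Fin n, p < t → t ≤ s → π t < s := by
    intro t hpt hts
    rcases lt_trichotomy (π t) s with h' | h' | h'
    · exact h'
    · exfalso
      have : t = p := by
        rw [hp, ← h', perm_inv_apply_self π]
      rw [this] at hpt; exact lt_irrefl _ hpt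
    · exfalso
      have h2 := hfix (π t) h'
      rw [perm_inv_apply_self π] at h2
      rw [← h2] at h'
      exact absurd (lt_of_le_of_lt hts h') (lt_irrefl t)
  -- m ≤ s implies π⁻¹ m ≤ s
  have hinvle : ∀ m : Fin n, m ≤ s → π⁻¹ m ≤ s := by
    intro m hm
    by_contra hc
    push_neg at hc
    have h2 := hfix' (π⁻¹ m) hc
    rw [perm_apply_inv_self π] at h2
    rw [← h2] at hc
    exact absurd (lt_of_le_of_lt hm hc) (lt_irrefl m)
  -- the value of dVector π s
  have hds : dVector π s = s.val - p.val := by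
    have himg : (Finset.univ.filter fun m => m < s ∧ π⁻¹ s < π⁻¹ m).image (fun m => π⁻¹ m)
        = Finset.Ioc p s := by
      apply Finset.ext
      intro t
      constructor
      · intro ht
        rcases Finset.mem_image.1 ht with ⟨m, hm, rfl⟩
        rcases Finset.mem_filter.1 hm with ⟨-, hm1, hm2⟩
        exact Finset.mem_Ioc.2 ⟨hm2, hinvle m hm1.le⟩
      · intro ht
        rcases Finset.mem_Ioc.1 ht with ⟨ht1, ht2⟩
        apply Finset.mem_image.2
        refine ⟨π t, Finset.mem_filter.2 ⟨Finset.mem_univ _, hmid t ht1 ht2, ?_⟩, perm_inv_apply_self π t⟩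
        rw [perm_inv_apply_self π]
        exact ht1
    have hcard := Finset.card_image_of_injective
      (Finset.univ.filter fun m => m < s ∧ π⁻¹ s < π⁻¹ m) π⁻¹.injective
    rw [himg] at hcard
    rw [dVector, ← hcard, Fin.card_Ioc]
  have hp1 : p.val < s.val := hpls
  have hs1 : s.val < n := s.isLt
  have hval : dVector π s + (n - (s.val + 1)) = n - 1 - p.val := by
    rw [hds]; omega
  rw [hval]
  constructor
  · refine ⟨by omega, by omega, ?_⟩
    intro i j hi hij
    have hpi : p < i := by
      rw [Fin.lt_def]; omega
    rcases lt_or_ge s j with hsj | hjs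
    · have hj := hfix' j hsj
      rcases lt_or_ge s i with hsi | his
      · have hi' := hfix' i hsi
        rw [hi', hj]; exact hij
      · have := hmid i hpi his
        rw [hj]
        exact this.trans hsj
    · by_contra hc
      push_neg at hc
      have hne : π j ≠ π i := fun h => (π.injective h ▸ hij).false
      have hlt : π j < π i := lt_of_le_of_ne hc hne
      exact h321 ⟨p, i, j, hpi, hij, hlt, by rw [hps]; exact hmid i hpi (hij.le.trans hjs)⟩
  · intro m hm
    rcases hm with ⟨hm1, hm2, hm3⟩
    by_contra hc
    push_neg at hc
    have hnm : n - m ≤ p.val := by omega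
    have hj1 : p.val + 1 < n := by omega
    set j : Fin n := ⟨p.val + 1, hj1⟩ with hj
    have hpj : p < j := by rw [Fin.lt_def]; simp [hj]
    have hjle : j ≤ s := by rw [Fin.le_def]; simp [hj]; omega
    have h1 := hm3 p j hnm hpj
    have h2 := hmid j hpj hjle
    rw [← hps] at h2
    exact absurd (h1.trans h2) (lt_irrefl _)
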